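/- Let f ∈ ℝ[x₁,…,xₙ] be a nonzero homogeneous polynomial of degree d with f(x) > 0 for all x ≠ 0. Then there exists N ∈ ℕ such that ψ_N(x) = (x₁²+⋯+xₙ²)^N f(x) is a strictly convex function on ℝⁿ. -/

import Mathlib

open MvPolynomial Finset

noncomputable section

namespace SCaux

variable {n : ℕ}

def S (p : Fin n → ℝ) : ℝ := ∑ i, p i ^ 2
def ip (p v : Fin n → ℝ) : ℝ := ∑ i, p i * v i
def G (f : MvPolynomial (Fin n) ℝ) (p v : Fin n → ℝ) : ℝ :=
  ∑ i, v i * MvPolynomial.eval p (MvPolynomial.pderiv i f)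
def Hf (f : MvPolynomial (Fin n) ℝ) (p v : Fin n → ℝ) : ℝ :=
  ∑ i, v i * ∑ j, v j * MvPolynomial.eval p (MvPolynomial.pderiv j (MvPolynomial.pderiv i f))
def Phi (f : MvPolynomial (Fin n) ℝ) (N : ℕ) (p v : Fin n → ℝ) : ℝ :=
  4*N*(N-1) * (S p)^(N-2) * (ip p v)^2 * MvPolynomial.eval p f
  + 2*N * (S p)^(N-1) * (S v) * MvPolynomial.eval p f
  + 4*N * (S p)^(N-1) * (ip p v) * (G f p v)
  + (S p)^N * (Hf f p v)
def Phi1 (f : MvPolynomial (Fin n) ℝ) (N : ℕ) (x v : Fin n → ℝ) (s : ℝ) : ℝ :=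
  2*N * (S (x + s • v))^(N-1) * ip (x + s • v) v * MvPolynomial.eval (x + s • v) f
  + (S (x + s • v))^N * G f (x + s • v) v

/-! ### Algebraic lemmas -/

lemma eval_smul {e : ℕ} {g : MvPolynomial (Fin n) ℝ} (hg : g.IsHomogeneous e)
    (c : ℝ) (x : Fin n → ℝ) :
    MvPolynomial.eval (c • x) g = c ^ e * MvPolynomial.eval x g := by
  rw [MvPolynomial.eval_eq, MvPolynomial.eval_eq, Finset.mul_sum]
  refine Finset.sum_congr rfl fun m hm => ?_
  have hdeg : ∑ i ∈ m.support, m i = e := by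
    have h := hg (MvPolynomial.mem_support_iff.mp hm)
    have : Finsupp.degree m = e := by
      rw [Finsupp.degree_eq_weight_one]; exact h
    simpa [Finsupp.degree_apply] using this
  have : ∏ i ∈ m.support, (c • x) i ^ m i
      = c ^ e * ∏ i ∈ m.support, x i ^ m i := by
    simp only [Pi.smul_apply, smul_eq_mul, mul_pow]
    rw [Finset.prod_mul_distrib, Finset.prod_pow_eq_pow_sum, hdeg]
  rw [this]; ring

lemma pderiv_homog {e : ℕ} {g : MvPolynomial (Fin n) ℝ} (hg : g.IsHomogeneous e)
    (i : Fin n) : (MvPolynomial.pderiv i g).IsHomogeneous (e - 1) := by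
  have hrw : MvPolynomial.pderiv i g
      = ∑ m ∈ g.support, MvPolynomial.pderiv i (MvPolynomial.monomial m (MvPolynomial.coeff m g)) := by
    conv_lhs => rw [g.as_sum]
    rw [map_sum]
  rw [hrw, ← MvPolynomial.mem_homogeneousSubmodule]
  refine Submodule.sum_mem _ fun m hm => ?_
  rw [MvPolynomial.pderiv_monomial, MvPolynomial.mem_homogeneousSubmodule]
  rcases Nat.eq_zero_or_pos (m i) with h0 | hpos
  · rw [h0]; simpa using MvPolynomial.isHomogeneous_zero (Fin n) ℝ (e - 1)
  · apply MvPolynomial.isHomogeneous_monomial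
    have hmd : Finsupp.degree m = e := by
      rw [Finsupp.degree_eq_weight_one]
      exact hg (MvPolynomial.mem_support_iff.mp hm)
    have hle : Finsupp.single i 1 ≤ m := by
      rw [Finsupp.single_le_iff]; exact hpos
    have hadd : m - Finsupp.single i 1 + Finsupp.single i 1 = m := tsub_add_cancel_of_le hle
    have hs : Finsupp.degree (Finsupp.single i (1:ℕ)) = 1 := by
      rw [Finsupp.degree_apply, Finsupp.support_single_ne_zero _ one_ne_zero,
        Finset.sum_singleton, Finsupp.single_eq_same]
    have h2 := congrArg Finsupp.degree hadd
    rw [Finsupp.degree_eq_weight_one, map_add, ← Finsupp.degree_eq_weight_one] at h2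
    rw [show Finsupp.degree (m - Finsupp.single i 1)
        = Finsupp.weight 1 (m - Finsupp.single i 1) from by
      rw [Finsupp.degree_eq_weight_one]; rfl] at h2 ⊢
    omega

lemma pderiv_homog0 {g : MvPolynomial (Fin n) ℝ} (hg : g.IsHomogeneous 0)
    (i : Fin n) : MvPolynomial.pderiv i g = 0 := by
  have hrw : MvPolynomial.pderiv i g
      = ∑ m ∈ g.support, MvPolynomial.pderiv i (MvPolynomial.monomial m (MvPolynomial.coeff m g)) := by
    conv_lhs => rw [g.as_sum]
    rw [map_sum]
  rw [hrw]
  refine Finset.sum_eq_zero fun m hm => ?_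
  rw [MvPolynomial.pderiv_monomial]
  have hmd : Finsupp.degree m = 0 := by
    rw [Finsupp.degree_eq_weight_one]
    exact hg (MvPolynomial.mem_support_iff.mp hm)
  rw [Finsupp.degree_eq_zero_iff] at hmd
  simp [hmd]

/-! ### Scaling lemmas -/

lemma S_smul (c : ℝ) (u : Fin n → ℝ) : S (c • u) = c^2 * S u := by
  unfold S; rw [Finset.mul_sum]; exact Finset.sum_congr rfl fun i _ => by simp; ring

lemma ip_smul (c e : ℝ) (u w : Fin n → ℝ) : ip (c • u) (e • w) = c * e * ip u w := by
  unfold ip; rw [Finset.mul_sum]; exact Finset.sum_congr rfl fun i _ => by simp; ring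

lemma G_smul {d : ℕ} {f : MvPolynomial (Fin n) ℝ} (hf : f.IsHomogeneous d)
    (c e : ℝ) (u w : Fin n → ℝ) :
    G f (c • u) (e • w) = e * c^(d-1) * G f u w := by
  unfold G; rw [Finset.mul_sum]
  refine Finset.sum_congr rfl fun i _ => ?_
  rw [eval_smul (pderiv_homog hf i) c u]; simp; ring

lemma Hf_smul {d : ℕ} {f : MvPolynomial (Fin n) ℝ} (hf : f.IsHomogeneous d)
    (c e : ℝ) (u w : Fin n → ℝ) :
    Hf f (c • u) (e • w) = e^2 * c^(d-2) * Hf f u w := by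
  unfold Hf; rw [Finset.mul_sum]
  refine Finset.sum_congr rfl fun i _ => ?_
  have hinner : ∑ j, (e • w) j * MvPolynomial.eval (c • u) (MvPolynomial.pderiv j (MvPolynomial.pderiv i f))
      = e * c^(d-2) * ∑ j, w j * MvPolynomial.eval u (MvPolynomial.pderiv j (MvPolynomial.pderiv i f)) := by
    rw [Finset.mul_sum]
    refine Finset.sum_congr rfl fun j _ => ?_
    have h2 : (MvPolynomial.pderiv j (MvPolynomial.pderiv i f)).IsHomogeneous (d - 2) := by
      have := pderiv_homog (pderiv_homog hf i) j
      rwa [Nat.sub_sub] at this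
    rw [eval_smul h2 c u]; simp; ring
  rw [hinner]; simp; ring

lemma G_zero {f : MvPolynomial (Fin n) ℝ} (hf : f.IsHomogeneous 0) (u w : Fin n → ℝ) :
    G f u w = 0 := by
  unfold G
  refine Finset.sum_eq_zero fun i _ => by rw [pderiv_homog0 hf i]; simp

lemma Hf_zero {f : MvPolynomial (Fin n) ℝ} (hf : f.IsHomogeneous 0) (u w : Fin n → ℝ) :
    Hf f u w = 0 := by
  unfold Hf
  refine Finset.sum_eq_zero fun i _ => ?_
  have : ∀ j : Fin n, MvPolynomial.pderiv j (MvPolynomial.pderiv i f) = 0 := fun j => by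
    rw [pderiv_homog0 hf i]; simp
  simp [this]

lemma Phi_smul {d : ℕ} {f : MvPolynomial (Fin n) ℝ} (hf : f.IsHomogeneous d)
    (hd : d ≠ 1) (N : ℕ) (hN : 2 ≤ N) (c e : ℝ) (u w : Fin n → ℝ) :
    Phi f N (c • u) (e • w) = e^2 * c^(2*N + d - 2) * Phi f N u w := by
  obtain ⟨M, rfl⟩ : ∃ M, N = M + 2 := ⟨N - 2, by omega⟩
  rcases Nat.eq_zero_or_pos d with hd0 | hdpos
  · subst hd0
    have hG : ∀ p v : Fin n → ℝ, G f p v = 0 := G_zero hf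
    have hH : ∀ p v : Fin n → ℝ, Hf f p v = 0 := Hf_zero hf
    unfold Phi
    rw [hG, hG, hH, hH, S_smul, ip_smul, S_smul, eval_smul hf]
    rw [show M + 2 - 2 = M from by omega, show M + 2 - 1 = M + 1 from by omega,
      show 2 * (M + 2) + 0 - 2 = 2 * M + 2 from by omega]
    ring
  · obtain ⟨E, rfl⟩ : ∃ E, d = E + 2 := ⟨d - 2, by omega⟩
    unfold Phi
    rw [S_smul c u, S_smul e w, ip_smul, eval_smul hf, G_smul hf, Hf_smul hf]
    rw [show M + 2 - 2 = M from by omega, show M + 2 - 1 = M + 1 from by omega,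
      show E + 2 - 1 = E + 1 from by omega, show E + 2 - 2 = E from by omega,
      show 2 * (M + 2) + (E + 2) - 2 = 2 * M + E + 4 from by omega]
    ring

lemma Phi_at_zero {f : MvPolynomial (Fin n) ℝ} (N : ℕ) (hN : 2 ≤ N) (v : Fin n → ℝ) :
    Phi f N 0 v = 0 := by
  have hS0 : S (0 : Fin n → ℝ) = 0 := by unfold S; simp
  have hip0 : ip (0 : Fin n → ℝ) v = 0 := by unfold ip; simp
  unfold Phi
  rw [hS0, hip0]
  rw [zero_pow (by omega : N - 1 ≠ 0), zero_pow (by omega : N ≠ 0)]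
  ring

/-! ### Calculus lemmas -/

lemma coord_line (x v : Fin n → ℝ) (t : ℝ) (i : Fin n) :
    HasDerivAt (fun s : ℝ => (x + s • v) i) (v i) t := by
  have : (fun s : ℝ => (x + s • v) i) = fun s : ℝ => x i + s * v i := by
    funext s; simp
  rw [this]
  simpa using ((hasDerivAt_id t).mul_const (v i)).const_add (x i)

lemma hasDerivAt_line (g : MvPolynomial (Fin n) ℝ) (x v : Fin n → ℝ) (t : ℝ) :
    HasDerivAt (fun s : ℝ => MvPolynomial.eval (x + s • v) g) (G g (x + t • v) v) t := by
  unfold G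
  induction g using MvPolynomial.induction_on with
  | C a => simpa using hasDerivAt_const t a
  | add p q hp hq =>
      have := hp.add hq
      simp only [map_add, mul_add, Finset.sum_add_distrib] at this ⊢
      exact this
  | mul_X p j hp =>
      have hx : HasDerivAt (fun s : ℝ => (x + s • v) j) (v j) t := coord_line x v t j
      have hmul := hp.mul hx
      have hfun : (fun s : ℝ => MvPolynomial.eval (x + s • v) (p * MvPolynomial.X j))
          = fun s : ℝ => MvPolynomial.eval (x + s • v) p * (x + s • v) j := by
        funext s; simp
      rw [hfun]
      convert hmul using 1
      · rfl
      · rfl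
      · rfl
      have hsplit : ∀ i, v i * MvPolynomial.eval (x + t • v) (MvPolynomial.pderiv i (p * MvPolynomial.X j))
          = v i * MvPolynomial.eval (x + t • v) (MvPolynomial.pderiv i p) * ((x + t • v) j)
            + v i * MvPolynomial.eval (x + t • v) p
              * MvPolynomial.eval (x + t • v) (MvPolynomial.pderiv i (MvPolynomial.X j)) := by
        intro i
        rw [MvPolynomial.pderiv_mul]
        simp only [map_add, map_mul, MvPolynomial.eval_X]
        ring
      rw [Finset.sum_congr rfl fun i _ => hsplit i, Finset.sum_add_distrib, ← Finset.sum_mul]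
      congr 1
      rw [Finset.sum_eq_single j]
      · simp [mul_comm]
      · intro i _ hne
        rw [MvPolynomial.pderiv_X_of_ne (Ne.symm hne)]
        simp
      · intro h; exact absurd (Finset.mem_univ j) h

lemma hasDerivAt_S (x v : Fin n → ℝ) (t : ℝ) :
    HasDerivAt (fun s : ℝ => S (x + s • v)) (2 * ip (x + t • v) v) t := by
  have h : ∀ i : Fin n, HasDerivAt (fun s : ℝ => (x + s • v) i ^ 2)
      (2 * ((x + t • v) i) * v i) t := fun i => by
    simpa using (coord_line x v t i).fun_pow 2
  have hsum := HasDerivAt.fun_sum (u := Finset.univ) (fun i _ => h i)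
  unfold S ip
  convert hsum using 1
  · rfl
  · rfl
  rw [Finset.mul_sum]
  exact Finset.sum_congr rfl fun i _ => by ring

lemma hasDerivAt_ip (x v : Fin n → ℝ) (t : ℝ) :
    HasDerivAt (fun s : ℝ => ip (x + s • v) v) (S v) t := by
  have h : ∀ i : Fin n, HasDerivAt (fun s : ℝ => (x + s • v) i * v i) (v i * v i) t :=
    fun i => (coord_line x v t i).mul_const (v i)
  have hsum := HasDerivAt.fun_sum (u := Finset.univ) (fun i _ => h i)
  unfold S ip
  convert hsum using 1
  · rfl
  · rfl
  exact Finset.sum_congr rfl fun i _ => by ring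

lemma hasDerivAt_G (f : MvPolynomial (Fin n) ℝ) (x v : Fin n → ℝ) (t : ℝ) :
    HasDerivAt (fun s : ℝ => G f (x + s • v) v) (Hf f (x + t • v) v) t := by
  have h : ∀ i : Fin n, HasDerivAt
      (fun s : ℝ => v i * MvPolynomial.eval (x + s • v) (MvPolynomial.pderiv i f))
      (v i * G (MvPolynomial.pderiv i f) (x + t • v) v) t :=
    fun i => (hasDerivAt_line (MvPolynomial.pderiv i f) x v t).const_mul (v i)
  have hsum := HasDerivAt.fun_sum (u := Finset.univ) (fun i _ => h i)
  unfold G Hf at *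
  exact hsum

lemma hasDerivAt_psi (f : MvPolynomial (Fin n) ℝ) (N : ℕ)
    (x v : Fin n → ℝ) (t : ℝ) :
    HasDerivAt (fun s : ℝ => (S (x + s • v))^N * MvPolynomial.eval (x + s • v) f)
      (Phi1 f N x v t) t := by
  have h := ((hasDerivAt_S x v t).pow N).mul (hasDerivAt_line f x v t)
  convert h using 1
  · rfl
  · rfl
  · rfl
  unfold Phi1
  have : ((N : ℝ)) * (S (x + t • v))^(N-1) * (2 * ip (x + t • v) v) * MvPolynomial.eval (x + t • v) f
      = 2*N * (S (x + t • v))^(N-1) * ip (x + t • v) v * MvPolynomial.eval (x + t • v) f := by ring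
  simp only [Pi.pow_apply]
  rw [← this]

lemma hasDerivAt_Phi1 (f : MvPolynomial (Fin n) ℝ) (N : ℕ) (hN : 2 ≤ N)
    (x v : Fin n → ℝ) (t : ℝ) :
    HasDerivAt (Phi1 f N x v) (Phi f N (x + t • v) v) t := by
  have hS := hasDerivAt_S x v t
  have hip := hasDerivAt_ip x v t
  have hg := hasDerivAt_line f x v t
  have hG := hasDerivAt_G f x v t
  have h1 := (((hS.pow (N-1)).mul hip).mul hg).const_mul (2*(N:ℝ))
  have h2 := (hS.pow N).mul hG
  have h := h1.add h2
  have hfun : Phi1 f N x v = fun s : ℝ =>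
      2*(N:ℝ) * ((S (x + s • v))^(N-1) * ip (x + s • v) v * MvPolynomial.eval (x + s • v) f)
      + (S (x + s • v))^N * G f (x + s • v) v := by
    funext s; unfold Phi1; ring
  rw [hfun]
  convert h using 1
  · rfl
  · rfl
  · rfl
  unfold Phi
  have e1 : N - 1 - 1 = N - 2 := by omega
  have e2 : ((N - 1 : ℕ) : ℝ) = (N : ℝ) - 1 := by
    have : (1:ℕ) ≤ N := by omega
    push_cast [Nat.cast_sub this]; ring
  rw [e1, e2]
  simp only [Pi.pow_apply, Pi.mul_apply]
  ring

/-! ### The key elementary inequality -/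

theorem key_ineq (Nr m M1 M2 t F Gv H : ℝ) (hN : 2 ≤ Nr) (hm : 0 < m)
    (hM1 : 0 ≤ M1) (hM2 : 0 ≤ M2)
    (key : M2^2 + m*M1 < 2*(Nr-1)*m^2)
    (hF : m ≤ F) (hG1 : -M2 ≤ Gv) (hG2 : Gv ≤ M2) (hH1 : -M1 ≤ H) :
    0 < 4*Nr*(Nr-1)*t^2*F + 2*Nr*F + 4*Nr*t*Gv + H := by
  have h1 : (0:ℝ) < Nr - 1 := by linarith
  have h2 : (0:ℝ) < Nr := by linarith
  have h4 : 0 ≤ 4*Nr*(Nr-1)*t^2*(F-m) := by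
    apply mul_nonneg _ (by linarith : (0:ℝ) ≤ F - m)
    positivity
  have halpha : (0:ℝ) < (Nr-1)*m := by positivity
  have hkeyN : Nr*(M2^2 + m*M1) < Nr*(2*(Nr-1)*m^2) := (mul_lt_mul_iff_right₀ h2).mpr key
  have hGv2 : Gv^2 ≤ M2^2 := sq_le_sq' hG1 hG2
  have hGv2' : Nr*Gv^2 ≤ Nr*M2^2 := (mul_le_mul_iff_right₀ h2).mpr hGv2
  have hm1 : (Nr-1)*(m*M1) ≤ Nr*(m*M1) :=
    mul_le_mul_of_nonneg_right (by linarith) (mul_nonneg hm.le hM1)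
  have hP : 0 < (4*Nr*(Nr-1)*m*t^2 + 4*Nr*t*Gv + 2*Nr*m - M1) * ((Nr-1)*m) := by
    nlinarith [sq_nonneg (2*((Nr-1)*m)*t + Gv), mul_nonneg h2.le (sq_nonneg (2*((Nr-1)*m)*t + Gv))]
  have hP' : 0 < 4*Nr*(Nr-1)*m*t^2 + 4*Nr*t*Gv + 2*Nr*m - M1 := by
    by_contra hc
    push_neg at hc
    nlinarith [mul_nonneg (neg_nonneg.mpr hc) halpha.le]
  nlinarith [h4, mul_nonneg (by positivity : (0:ℝ) ≤ 2*Nr) (sub_nonneg.mpr hF)]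

/-! ### Compactness: choice of N -/

lemma S_nonneg (p : Fin n → ℝ) : 0 ≤ S p := Finset.sum_nonneg fun i _ => sq_nonneg _

lemma S_pos {p : Fin n → ℝ} (hp : p ≠ 0) : 0 < S p := by
  rcases Function.ne_iff.mp hp with ⟨i, hi⟩
  refine Finset.sum_pos' (fun j _ => sq_nonneg _) ⟨i, Finset.mem_univ i, ?_⟩
  have : (0:ℝ) < p i ^ 2 := lt_of_le_of_ne (sq_nonneg _) (Ne.symm (pow_ne_zero 2 hi))
  simpa using this

lemma ne_zero_of_S_one {p : Fin n → ℝ} (hp : S p = 1) : p ≠ 0 := by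
  intro h
  rw [h] at hp
  unfold S at hp
  simp at hp

lemma continuous_S : Continuous (S : (Fin n → ℝ) → ℝ) :=
  continuous_finset_sum _ fun i _ => (continuous_apply i).pow 2

lemma continuous_evalf (f : MvPolynomial (Fin n) ℝ) :
    Continuous fun p : Fin n → ℝ => MvPolynomial.eval p f :=
  f.continuous_eval

lemma continuous_G (f : MvPolynomial (Fin n) ℝ) :
    Continuous fun q : (Fin n → ℝ) × (Fin n → ℝ) => G f q.1 q.2 := by
  unfold G
  refine continuous_finset_sum _ fun i _ => Continuous.mul ?_ ?_
  · exact (continuous_apply i).comp continuous_snd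
  · exact (continuous_evalf _).comp continuous_fst

lemma continuous_Hf (f : MvPolynomial (Fin n) ℝ) :
    Continuous fun q : (Fin n → ℝ) × (Fin n → ℝ) => Hf f q.1 q.2 := by
  unfold Hf
  refine continuous_finset_sum _ fun i _ => Continuous.mul
    ((continuous_apply i).comp continuous_snd)
    (continuous_finset_sum _ fun j _ => Continuous.mul
      ((continuous_apply j).comp continuous_snd)
      ((continuous_evalf _).comp continuous_fst))

lemma isCompact_sphereS : IsCompact {u : Fin n → ℝ | S u = 1} := by
  apply Metric.isCompact_of_isClosed_isBounded
  · exact isClosed_eq continuous_S continuous_const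
  · apply Bornology.IsBounded.subset (Metric.isBounded_closedBall (x := (0 : Fin n → ℝ)) (r := 1))
    intro u hu
    simp only [Metric.mem_closedBall, dist_zero_right]
    have hsq : ∀ i : Fin n, u i ^ 2 ≤ 1 := by
      intro i
      have := Finset.single_le_sum (f := fun j => u j ^ 2) (fun j _ => sq_nonneg _)
        (Finset.mem_univ i)
      simpa [hu.out] using le_trans this (le_of_eq hu.out)
    rw [show (1:ℝ) = ((1:ℝ)) from rfl]
    apply pi_norm_le_iff_of_nonneg (by norm_num : (0:ℝ) ≤ 1) |>.mpr
    intro i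
    rw [Real.norm_eq_abs]
    nlinarith [sq_abs (u i), abs_nonneg (u i), hsq i]

end SCaux

namespace SCaux

variable {n : ℕ}

lemma exists_good_N {d : ℕ} {f : MvPolynomial (Fin n) ℝ} (hn : 0 < n)
    (hhom : f.IsHomogeneous d) (hd1 : d ≠ 1)
    (hpos : ∀ x : Fin n → ℝ, x ≠ 0 → 0 < MvPolynomial.eval x f) :
    ∃ N : ℕ, 2 ≤ N ∧ ∀ p v : Fin n → ℝ, p ≠ 0 → v ≠ 0 → 0 < Phi f N p v := by
  haveI : Nonempty (Fin n) := ⟨⟨0, hn⟩⟩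
  set A : Set (Fin n → ℝ) := {u | S u = 1} with hA
  have hAc : IsCompact A := isCompact_sphereS
  have hAne : A.Nonempty := by
    refine ⟨Pi.single (Classical.arbitrary (Fin n)) 1, ?_⟩
    simp only [hA, Set.mem_setOf_eq, S]
    rw [Finset.sum_eq_single (Classical.arbitrary (Fin n))]
    · simp
    · intro j _ hne; rw [Pi.single_eq_of_ne hne]; simp
    · intro h; exact absurd (Finset.mem_univ _) h
  -- minimum of f on the sphere
  obtain ⟨u₀, hu₀A, hmin⟩ := hAc.exists_isMinOn hAne (continuous_evalf f).continuousOn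
  set m : ℝ := MvPolynomial.eval u₀ f with hm_def
  have hm : 0 < m := hpos u₀ (ne_zero_of_S_one hu₀A)
  -- maxima of |G| and |Hf| on sphere × sphere
  have hBc : IsCompact (A ×ˢ A) := hAc.prod hAc
  have hBne : (A ×ˢ A).Nonempty := hAne.prod hAne
  obtain ⟨q₂, hq₂, hmax₂⟩ := hBc.exists_isMaxOn hBne
    ((continuous_G f).abs.continuousOn)
  set M2 : ℝ := |G f q₂.1 q₂.2| with hM2_def
  have hM2 : 0 ≤ M2 := abs_nonneg _
  obtain ⟨q₁, hq₁, hmax₁⟩ := hBc.exists_isMaxOn hBne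
    ((continuous_Hf f).abs.continuousOn)
  set M1 : ℝ := |Hf f q₁.1 q₁.2| with hM1_def
  have hM1 : 0 ≤ M1 := abs_nonneg _
  -- choice of N
  obtain ⟨N, hNgt⟩ := exists_nat_gt (max 2 (1 + (M2^2 + m*M1)/(2*m^2)))
  have hN2R : (2:ℝ) < N := lt_of_le_of_lt (le_max_left _ _) hNgt
  have hN2 : 2 ≤ N := by exact_mod_cast hN2R.le
  have hkey : M2^2 + m*M1 < 2*((N:ℝ)-1)*m^2 := by
    have h1 : 1 + (M2^2 + m*M1)/(2*m^2) < N := lt_of_le_of_lt (le_max_right _ _) hNgt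
    have h2 : (M2^2 + m*M1)/(2*m^2) < (N:ℝ) - 1 := by linarith
    have h3 : (0:ℝ) < 2*m^2 := by positivity
    rw [div_lt_iff₀ h3] at h2
    linarith [h2]
  refine ⟨N, hN2, fun p v hp hv => ?_⟩
  -- positivity on the sphere
  have sphere_pos : ∀ u w : Fin n → ℝ, S u = 1 → S w = 1 → 0 < Phi f N u w := by
    intro u w hu hw
    have huA : u ∈ A := hu
    have hwA : w ∈ A := hw
    have hF : m ≤ MvPolynomial.eval u f := hmin huA
    have hGb : |G f u w| ≤ M2 := hmax₂ (Set.mk_mem_prod huA hwA)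
    have hHb : |Hf f u w| ≤ M1 := hmax₁ (Set.mk_mem_prod huA hwA)
    obtain ⟨hG1, hG2⟩ := abs_le.mp hGb
    obtain ⟨hH1, _⟩ := abs_le.mp hHb
    have := key_ineq (N:ℝ) m M1 M2 (ip u w) (MvPolynomial.eval u f) (G f u w) (Hf f u w)
      hN2R.le hm hM1 hM2 hkey hF hG1 hG2 hH1
    unfold Phi
    rw [hu, hw]
    simpa using this
  -- scale to the sphere
  set c : ℝ := Real.sqrt (S p) with hc_def
  set e : ℝ := Real.sqrt (S v) with he_def
  have hcp : 0 < c := Real.sqrt_pos.mpr (S_pos hp)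
  have hep : 0 < e := Real.sqrt_pos.mpr (S_pos hv)
  set u : Fin n → ℝ := c⁻¹ • p with hu_def
  set w : Fin n → ℝ := e⁻¹ • v with hw_def
  have hSu : S u = 1 := by
    rw [hu_def, S_smul]
    rw [hc_def, ← Real.sqrt_inv, Real.sq_sqrt (inv_nonneg.mpr (S_nonneg p))]
    exact inv_mul_cancel₀ (ne_of_gt (S_pos hp))
  have hSw : S w = 1 := by
    rw [hw_def, S_smul, he_def, ← Real.sqrt_inv, Real.sq_sqrt (inv_nonneg.mpr (S_nonneg v))]
    exact inv_mul_cancel₀ (ne_of_gt (S_pos hv))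
  have hpu : p = c • u := (smul_inv_smul₀ (ne_of_gt hcp) p).symm
  have hvw : v = e • w := (smul_inv_smul₀ (ne_of_gt hep) v).symm
  rw [hpu, hvw, Phi_smul hhom hd1 N hN2]
  have := sphere_pos u w hSu hSw
  positivity

end SCaux

namespace SCaux

variable {n : ℕ}

lemma line_strictConvex (f : MvPolynomial (Fin n) ℝ) (N : ℕ) (hN2 : 2 ≤ N)
    (hPhi : ∀ p v : Fin n → ℝ, p ≠ 0 → v ≠ 0 → 0 < Phi f N p v)
    (x v : Fin n → ℝ) (hv : v ≠ 0) :
    StrictConvexOn ℝ Set.univ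
      (fun s : ℝ => (S (x + s • v))^N * MvPolynomial.eval (x + s • v) f) := by
  have hder : ∀ t : ℝ, HasDerivAt
      (fun s : ℝ => (S (x + s • v))^N * MvPolynomial.eval (x + s • v) f)
      (Phi1 f N x v t) t := hasDerivAt_psi f N x v
  have hcont : Continuous
      (fun s : ℝ => (S (x + s • v))^N * MvPolynomial.eval (x + s • v) f) := by
    have h1 : Continuous fun s : ℝ => x + s • v := by continuity
    exact ((continuous_S.comp h1).pow N).mul ((continuous_evalf f).comp h1)
  have hderiv_eq : deriv (fun s : ℝ => (S (x + s • v))^N * MvPolynomial.eval (x + s • v) f)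
      = Phi1 f N x v := funext fun t => (hder t).deriv
  apply StrictMono.strictConvexOn_univ_of_deriv hcont
  rw [hderiv_eq]
  have hP1der : ∀ t : ℝ, HasDerivAt (Phi1 f N x v) (Phi f N (x + t • v) v) t :=
    hasDerivAt_Phi1 f N hN2 x v
  have hnonneg : ∀ t : ℝ, 0 ≤ Phi f N (x + t • v) v := fun t => by
    by_cases h : x + t • v = 0
    · rw [h, Phi_at_zero N hN2]
    · exact (hPhi _ v h hv).le
  have hmono : Monotone (Phi1 f N x v) := by
    apply monotone_of_deriv_nonneg
    · exact fun t => (hP1der t).differentiableAt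
    · intro t; rw [(hP1der t).deriv]; exact hnonneg t
  have hkey : ∀ a b : ℝ, a < b → Phi1 f N x v a = Phi1 f N x v b → False := by
    intro a b hlt heq
    have hconst : ∀ s, s ∈ Set.Icc a b → Phi1 f N x v s = Phi1 f N x v a := fun s hs =>
      le_antisymm (heq ▸ hmono hs.2) (hmono hs.1)
    set t₁ : ℝ := a + (b - a)/3 with ht₁_def
    set t₂ : ℝ := a + (b - a)/2 with ht₂_def
    have hba : 0 < b - a := by linarith
    have ht₁ : t₁ ∈ Set.Ioo a b := ⟨by rw [ht₁_def]; linarith, by rw [ht₁_def]; linarith⟩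
    have ht₂ : t₂ ∈ Set.Ioo a b := ⟨by rw [ht₂_def]; linarith, by rw [ht₂_def]; linarith⟩
    have hchoice : x + t₁ • v ≠ 0 ∨ x + t₂ • v ≠ 0 := by
      by_contra hc
      push_neg at hc
      obtain ⟨h1, h2⟩ := hc
      have hsub : (t₁ - t₂) • v = 0 := by
        rw [sub_smul]
        have : (x + t₁ • v) - (x + t₂ • v) = t₁ • v - t₂ • v := by abel
        rw [← this, h1, h2, sub_zero]
      rcases smul_eq_zero.mp hsub with h | h
      · have : t₁ ≠ t₂ := by
          rw [ht₁_def, ht₂_def]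
          intro hh
          have : (b - a)/3 = (b - a)/2 := by linarith
          have h6 : 2 * (b - a) = 3 * (b - a) := by linarith
          linarith
        exact this (by linarith [sub_eq_zero.mp h])
      · exact hv h
    have hzero_at : ∀ t' : ℝ, t' ∈ Set.Ioo a b → x + t' • v ≠ 0 → False := by
      intro t' ht' hpt'
      have hloc : Phi1 f N x v =ᶠ[nhds t'] fun _ => Phi1 f N x v a :=
        Filter.eventually_of_mem (isOpen_Ioo.mem_nhds ht')
          (fun s hs => hconst s ⟨hs.1.le, hs.2.le⟩)
      have hzero : HasDerivAt (Phi1 f N x v) 0 t' :=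
        (hasDerivAt_const t' (Phi1 f N x v a)).congr_of_eventuallyEq hloc
      have h0 := (hP1der t').unique hzero
      exact absurd h0 (ne_of_gt (hPhi _ v hpt' hv))
    rcases hchoice with h | h
    · exact hzero_at t₁ ht₁ h
    · exact hzero_at t₂ ht₂ h
  have hinj : Function.Injective (Phi1 f N x v) := by
    intro a b hab
    by_contra hne
    rcases lt_or_gt_of_ne hne with h | h
    · exact hkey a b h hab
    · exact hkey b a h hab.symm
  exact hmono.strictMono_of_injective hinj

end SCaux

end

/-- If `f` is a nonzero homogeneous polynomial of degree `d` positive off the origin, then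
`ψ_N(x) = (x₁²+⋯+xₙ²)^N f(x)` is strictly convex on `ℝⁿ` for some `N`. -/
theorem stmt_10 (n d : ℕ) (f : MvPolynomial (Fin n) ℝ) (hf0 : f ≠ 0)
    (hhom : f.IsHomogeneous d)
    (hpos : ∀ x : Fin n → ℝ, x ≠ 0 → 0 < MvPolynomial.eval x f) :
    ∃ N : ℕ, StrictConvexOn ℝ Set.univ
      (fun x : Fin n → ℝ => (∑ i, x i ^ 2) ^ N * MvPolynomial.eval x f) := by
  rcases Nat.eq_zero_or_pos n with hn0 | hn
  · subst hn0
    exact ⟨0, convex_univ, fun x _ y _ hxy _ _ _ _ _ =>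
      absurd (Subsingleton.elim x y) hxy⟩
  · haveI : Nonempty (Fin n) := ⟨⟨0, hn⟩⟩
    have hd1 : d ≠ 1 := by
      intro hd
      subst hd
      set i₀ := Classical.arbitrary (Fin n) with hi₀
      set x₀ : Fin n → ℝ := Pi.single i₀ 1 with hx₀_def
      have hx₀ : x₀ ≠ 0 := by
        intro h
        have := congrFun h i₀
        simp [hx₀_def] at this
      have h1 := hpos x₀ hx₀
      have h2 := hpos (-x₀) (by simpa using hx₀)
      have h3 := SCaux.eval_smul hhom (-1) x₀
      rw [show (-1:ℝ) • x₀ = -x₀ from by simp] at h3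
      rw [pow_one] at h3
      rw [h3] at h2
      linarith
    obtain ⟨N, hN2, hPhi⟩ := SCaux.exists_good_N hn hhom hd1 hpos
    refine ⟨N, convex_univ, ?_⟩
    intro x _ y _ hxy a b ha hb hab
    set v : Fin n → ℝ := y - x with hv_def
    have hv : v ≠ 0 := sub_ne_zero.mpr (Ne.symm hxy)
    have hconv := SCaux.line_strictConvex f N hN2 hPhi x v hv
    have hkey := hconv.2 (Set.mem_univ (0:ℝ)) (Set.mem_univ (1:ℝ)) (by norm_num) ha hb hab
    have e0 : x + (0:ℝ) • v = x := by simp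
    have e1 : x + (1:ℝ) • v = y := by simp [hv_def]
    have eb : x + (a • (0:ℝ) + b • (1:ℝ)) • v = a • x + b • y := by
      have hab' : a = 1 - b := by linarith
      simp only [smul_eq_mul, mul_zero, mul_one, zero_add]
      rw [hv_def, hab']
      ext i
      simp [smul_eq_mul]
      ring
    simp only at hkey
    rw [e0, e1, eb] at hkey
    simpa [SCaux.S, smul_eq_mul] using hkey
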